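/- Let G be a group generated by finite set S, π : G → H surjective onto a finite group with T = π(S), and suppose every element of H has T-word length at most n. Let g ∈ G with |g|_S ≤ L and let k = |π(g)|_T ≥ 1. Then g can be written as a product v_1 v_2 ⋯ v_k where each v_i ∈ π^{-1}(T^{±1}) and |v_i|_S ≤ L/k + 1 + 2n. -/

import Mathlib

/-- Word length of `g` with respect to generating set `S` (using `S ∪ S⁻¹`). -/
noncomputable def wl {G : Type*} [Group G] (S : Set G) (g : G) : ℕ :=
  sInf {n | ∃ l : List G, (∀ x ∈ l, x ∈ S ∨ x⁻¹ ∈ S) ∧ l.length = n ∧ l.prod = g}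

/-- Word metric with respect to `S`. -/
noncomputable def wdist {G : Type*} [Group G] (S : Set G) (g h : G) : ℕ := wl S (g⁻¹ * h)

/-- Dead-end depth of `g` with respect to `A`: distance to the nearest element strictly
farther from the identity, `⊤` if none exists. -/
noncomputable def depth {G : Type*} [Group G] (A : Set G) (g : G) : ℕ∞ :=
  sInf ((fun g' => (wdist A g g' : ℕ∞)) '' {g' | wl A g < wl A g'})

/-- Partial product `u 0 * u 1 * ⋯ * u (i-1)`. -/
def pprod {M : Type*} [Monoid M] (u : ℕ → M) (i : ℕ) : M := ((List.range i).map u).prod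

section helpers
variable {G : Type*} [Group G]

lemma wl_le' {S : Set G} {g : G} {l : List G} (h : ∀ x ∈ l, x ∈ S ∨ x⁻¹ ∈ S)
    (hp : l.prod = g) : wl S g ≤ l.length :=
  Nat.sInf_le ⟨l, h, rfl, hp⟩

lemma exists_geodesic' {S : Set G} (hgen : Subgroup.closure S = ⊤) (g : G) :
    ∃ l : List G, (∀ x ∈ l, x ∈ S ∨ x⁻¹ ∈ S) ∧ l.length = wl S g ∧ l.prod = g := by
  have hg : g ∈ (Subgroup.closure S).toSubmonoid := by
    rw [hgen]; trivial
  rw [Subgroup.closure_toSubmonoid] at hg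
  obtain ⟨l, hl, hp⟩ := Submonoid.exists_list_of_mem_closure hg
  have hl' : ∀ x ∈ l, x ∈ S ∨ x⁻¹ ∈ S := by
    intro x hx
    rcases hl x hx with h | h
    · exact Or.inl h
    · exact Or.inr h
  have hne : {n | ∃ l : List G, (∀ x ∈ l, x ∈ S ∨ x⁻¹ ∈ S) ∧ l.length = n ∧ l.prod = g}.Nonempty :=
    ⟨l.length, l, hl', rfl, hp⟩
  obtain ⟨l', h1, h2, h3⟩ := Nat.sInf_mem hne
  exact ⟨l', h1, h2, h3⟩

lemma tele' : ∀ (k : ℕ) (F : ℕ → G),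
    (List.ofFn fun i : Fin k => (F (i : ℕ))⁻¹ * F ((i : ℕ) + 1)).prod = (F 0)⁻¹ * F k := by
  intro k
  induction k with
  | zero => intro F; simp
  | succ k ih =>
    intro F
    rw [List.ofFn_succ]
    simp only [List.prod_cons, Fin.val_succ, Fin.val_zero]
    rw [ih (fun j => F (j + 1))]
    group

lemma lift_word' {H : Type*} [Group H] (π : G →* H) (S : Set G) :
    ∀ lh : List H, (∀ y ∈ lh, y ∈ π '' S ∨ y⁻¹ ∈ π '' S) →
    ∃ l : List G, (∀ y ∈ l, y ∈ S ∨ y⁻¹ ∈ S) ∧ l.length = lh.length ∧ π l.prod = lh.prod := by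
  intro lh
  induction lh with
  | nil => exact fun _ => ⟨[], by simp, by simp, by simp⟩
  | cons a t ih =>
    intro h
    obtain ⟨l, hl, hlen, hp⟩ := ih (fun y hy => h y (List.mem_cons_of_mem _ hy))
    rcases h a List.mem_cons_self with ⟨s, hs, hπ⟩ | ⟨s, hs, hπ⟩
    · refine ⟨s :: l, ?_, by simp [hlen], by simp [hp, hπ]⟩
      intro y hy
      rcases List.mem_cons.mp hy with rfl | hy
      · exact Or.inl hs
      · exact hl y hy
    · refine ⟨s⁻¹ :: l, ?_, by simp [hlen], ?_⟩
      · intro y hy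
        rcases List.mem_cons.mp hy with rfl | hy
        · exact Or.inr (by simpa using hs)
        · exact hl y hy
      · simp only [List.prod_cons, map_mul, map_inv, hπ, hp, inv_inv]

end helpers

/-- If every element of the finite quotient `H` has `T`-word length at most `n`, `|g|_S ≤ L`
and `k = |π(g)|_T ≥ 1`, then `g = v₁ ⋯ v_k` with each `π(vᵢ) ∈ T^{±1}` and
`|vᵢ|_S ≤ L/k + 1 + 2n`. -/
theorem stmt7 {G H : Type*} [Group G] [Group H] [Finite H] (π : G →* H)
    (hsurj : Function.Surjective π) (S : Set G) (hfin : S.Finite)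
    (hgen : Subgroup.closure S = ⊤) (n : ℕ) (hall : ∀ x : H, wl (π '' S) x ≤ n)
    (g : G) (L k : ℕ) (hL : wl S g ≤ L) (hk : wl (π '' S) (π g) = k) (hk1 : 1 ≤ k) :
    ∃ v : Fin k → G, (List.ofFn v).prod = g ∧
      ∀ i : Fin k, π (v i) ∈ π '' S ∪ (π '' S)⁻¹ ∧
        (wl S (v i) : ℝ) ≤ (L : ℝ) / (k : ℝ) + 1 + 2 * (n : ℝ) := by
  classical
  have hkpos : 0 < k := hk1
  have hk0 : (0 : ℝ) < (k : ℝ) := by exact_mod_cast hkpos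
  have hgenH : Subgroup.closure (π '' S) = ⊤ := by
    rw [← MonoidHom.map_closure, hgen, Subgroup.map_top_of_surjective π hsurj]
  -- section words
  have hWex : ∀ x : H, ∃ l : List G, (∀ y ∈ l, y ∈ S ∨ y⁻¹ ∈ S) ∧ l.length ≤ n ∧ π l.prod = x := by
    intro x
    obtain ⟨lh, hlh, hlen, hprod⟩ := exists_geodesic' hgenH x
    obtain ⟨l, hl, hlen', hp⟩ := lift_word' π S lh hlh
    exact ⟨l, hl, by rw [hlen', hlen]; exact hall x, by rw [hp, hprod]⟩
  choose W hW1 hW2 hW3 using hWex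
  set W' : H → List G := fun x => if x = 1 then [] else W x with hW'def
  have hW'1 : ∀ x, ∀ y ∈ W' x, y ∈ S ∨ y⁻¹ ∈ S := by
    intro x y hy
    by_cases hx : x = 1
    · simp [hW'def, hx] at hy
    · rw [hW'def] at hy; simp only [if_neg hx] at hy; exact hW1 x y hy
  have hW'2 : ∀ x, (W' x).length ≤ n := by
    intro x
    by_cases hx : x = 1 <;> simp [hW'def, hx, hW2]
  have hW'3 : ∀ x, π (W' x).prod = x := by
    intro x
    by_cases hx : x = 1 <;> simp [hW'def, hx, hW3]
  have hW'nil : W' 1 = [] := by simp [hW'def]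
  -- geodesics
  obtain ⟨lg, hlg, hlgl, hlgp⟩ := exists_geodesic' hgen g
  obtain ⟨lt, hlt, hltl, hltp⟩ := exists_geodesic' hgenH (π g)
  set m := lg.length with hm
  have hmL : m ≤ L := by rw [hlgl]; exact hL
  have hltk : lt.length = k := by rw [hltl, hk]
  set c : ℕ → ℕ := fun j => m * j / k with hc
  have hc0 : c 0 = 0 := by simp [hc]
  have hck : c k = m := by
    show m * k / k = m
    exact Nat.mul_div_cancel m hkpos
  have hcmono : Monotone c := fun a b hab =>
    Nat.div_le_div_right (Nat.mul_le_mul_left _ hab)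
  set U : ℕ → G := fun j => (lg.take (c j)).prod with hUdef
  set Tt : ℕ → H := fun j => (lt.take j).prod with hTtdef
  set A : ℕ → H := fun j => (π (U j))⁻¹ * Tt j with hAdef
  set F : ℕ → G := fun j => U j * (W' (A j)).prod with hFdef
  have hπF : ∀ j, π (F j) = Tt j := by
    intro j
    rw [hFdef]
    simp only [map_mul, hW'3, hAdef, mul_inv_cancel_left]
  have hU0 : U 0 = 1 := by simp [hUdef, hc0]
  have hTt0 : Tt 0 = 1 := by simp [hTtdef]
  have hUk : U k = g := by
    rw [hUdef]
    simp only [hck, hm]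
    rw [List.take_length, hlgp]
  have hTtk : Tt k = π g := by
    rw [hTtdef]
    simp only
    rw [← hltk, List.take_length, hltp]
  refine ⟨fun i => (F (i : ℕ))⁻¹ * F ((i : ℕ) + 1), ?_, ?_⟩
  · rw [tele' k F]
    have h0 : F 0 = 1 := by
      rw [hFdef]
      simp only [hU0, hAdef, hTt0, hU0, map_one, inv_one, mul_one, hW'nil, List.prod_nil, one_mul]
    have hkF : F k = g := by
      rw [hFdef]
      simp only [hUk, hAdef, hTtk, hUk, inv_mul_cancel, hW'nil, List.prod_nil, mul_one]
    rw [h0, hkF, inv_one, one_mul]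
  · intro i
    have hi : (i : ℕ) < lt.length := by rw [hltk]; exact i.isLt
    have hπv : π ((F (i : ℕ))⁻¹ * F ((i : ℕ) + 1)) = lt[(i : ℕ)] := by
      rw [map_mul, map_inv, hπF, hπF]
      rw [hTtdef]
      simp only
      rw [List.prod_take_succ lt (i : ℕ) hi]
      group
    constructor
    · rw [hπv]
      rcases hlt lt[(i : ℕ)] (List.getElem_mem hi) with h | h
      · exact Or.inl h
      · exact Or.inr (Set.mem_inv.mpr h)
    · -- word for v i
      set wd : List G := ((W' (A (i : ℕ))).reverse.map (fun x => x⁻¹)) ++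
        ((lg.take (c ((i : ℕ) + 1))).drop (c (i : ℕ))) ++ W' (A ((i : ℕ) + 1)) with hwd
    -- letters
      have hlet : ∀ y ∈ wd, y ∈ S ∨ y⁻¹ ∈ S := by
        intro y hy
        rw [hwd] at hy
        simp only [List.mem_append, List.mem_map, List.mem_reverse] at hy
        rcases hy with (⟨z, hz, rfl⟩ | hy) | hy
        · rcases hW'1 _ z hz with h | h
          · exact Or.inr (by simpa using h)
          · exact Or.inl h
        · exact hlg y (List.mem_of_mem_take (List.mem_of_mem_drop hy))
        · exact hW'1 _ y hy
      -- product
      have hmid : ((lg.take (c ((i : ℕ) + 1))).drop (c (i : ℕ))).prod = (U (i : ℕ))⁻¹ * U ((i : ℕ) + 1) := by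
        have h1 := List.prod_take_mul_prod_drop (lg.take (c ((i : ℕ) + 1))) (c (i : ℕ))
        rw [List.take_take, min_eq_left (hcmono (Nat.le_succ _))] at h1
        rw [hUdef]
        simp only
        rw [← h1]
        group
      have hprod : wd.prod = (F (i : ℕ))⁻¹ * F ((i : ℕ) + 1) := by
        rw [hwd, List.prod_append, List.prod_append]
        have hinv : ((W' (A (i : ℕ))).reverse.map (fun x => x⁻¹)).prod = ((W' (A (i : ℕ))).prod)⁻¹ := by
          rw [List.prod_inv_reverse, List.map_reverse]
        rw [hinv, hmid, hFdef]
        simp only [mul_inv_rev]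
        group
      have hwl : wl S ((F (i : ℕ))⁻¹ * F ((i : ℕ) + 1)) ≤ n + (c ((i : ℕ) + 1) - c (i : ℕ)) + n := by
        refine le_trans (wl_le' hlet hprod) ?_
        rw [hwd]
        simp only [List.length_append, List.length_map, List.length_reverse, List.length_drop,
          List.length_take]
        have h1 := hW'2 (A (i : ℕ))
        have h2 := hW'2 (A ((i : ℕ) + 1))
        have h3 : min (c ((i : ℕ) + 1)) m - c (i : ℕ) ≤ c ((i : ℕ) + 1) - c (i : ℕ) := by
          have := min_le_left (c ((i : ℕ) + 1)) m
          omega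
        omega
      -- numeric bound
      have hd : ((c ((i : ℕ) + 1) - c (i : ℕ) : ℕ) : ℝ) ≤ (m : ℝ) / (k : ℝ) + 1 := by
        have hmo : c (i : ℕ) ≤ c ((i : ℕ) + 1) := hcmono (Nat.le_succ _)
        rw [Nat.cast_sub hmo]
        have h2 : c ((i : ℕ) + 1) * k ≤ m * ((i : ℕ) + 1) := Nat.div_mul_le_self _ _
        have h1 : m * (i : ℕ) < k * (c (i : ℕ)) + k := by
          have h4 := Nat.div_add_mod (m * (i : ℕ)) k
          have h5 := Nat.mod_lt (m * (i : ℕ)) hkpos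
          show m * (i : ℕ) < k * (m * (i : ℕ) / k) + k
          omega
        have h2' : ((c ((i : ℕ) + 1) : ℕ) : ℝ) * k ≤ (m : ℝ) * ((i : ℕ) + 1) := by exact_mod_cast h2
        have h1' : (m : ℝ) * (i : ℕ) < (k : ℝ) * (c (i : ℕ)) + k := by exact_mod_cast h1
        have hq : (m : ℝ) = (m : ℝ) / (k : ℝ) * k := (div_mul_cancel₀ _ (ne_of_gt hk0)).symm
        nlinarith [h2', h1', hk0, hq]
      have hfin2 : ((wl S ((F (i : ℕ))⁻¹ * F ((i : ℕ) + 1))) : ℝ) ≤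
          (n : ℝ) + ((c ((i : ℕ) + 1) - c (i : ℕ) : ℕ) : ℝ) + n := by exact_mod_cast hwl
      have hmk : (m : ℝ) / (k : ℝ) ≤ (L : ℝ) / (k : ℝ) := by
        have hcast : (m : ℝ) ≤ (L : ℝ) := Nat.cast_le.mpr hmL
        gcongr
      linarith [hfin2, hd, hmk]
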